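/- Every unswitchable simple graph G arises from the Eggleton construction: there exists a positive integer n and pairwise disjoint finite (possibly empty) sets S_1, …, S_{2n} whose union is the vertex set of G, such that two distinct vertices a ∈ S_i and b ∈ S_j with i ≤ j are adjacent in G exactly when i + n < j or i > n. -/

import Mathlib

/-- A graph is unswitchable if no 2-switch is possible in it: there are no four distinct
vertices `u, v, w, x` with `{u,v}, {w,x}` edges and `{u,w}, {v,x}` non-edges. -/
def Unswitchable {V : Type*} (G : SimpleGraph V) : Prop :=
  ¬ ∃ u v w x : V, u ≠ v ∧ u ≠ w ∧ u ≠ x ∧ v ≠ w ∧ v ≠ x ∧ w ≠ x ∧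
      G.Adj u v ∧ G.Adj w x ∧ ¬ G.Adj u w ∧ ¬ G.Adj v x

namespace EggletonAux

variable {V : Type*}

def rel (G : SimpleGraph V) (u v : V) : Prop :=
  ∀ w, w ≠ u → w ≠ v → G.Adj u w → G.Adj v w

lemma rel_refl (G : SimpleGraph V) (u : V) : rel G u u := fun _ _ _ h => h

lemma rel_total (G : SimpleGraph V) (hG : Unswitchable G) (u v : V) :
    rel G u v ∨ rel G v u := by
  by_contra h
  push_neg at h
  obtain ⟨h1, h2⟩ := h
  unfold rel at h1 h2
  push_neg at h1 h2
  obtain ⟨w, hwu, hwv, huw, hvw⟩ := h1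
  obtain ⟨x, hxv, hxu, hvx, hux⟩ := h2
  apply hG
  refine ⟨u, w, x, v, Ne.symm hwu, Ne.symm hxu, ?_, ?_, hwv, hxv,
    huw, hvx.symm, hux, fun h => hvw h.symm⟩
  · rintro rfl; exact hvw huw
  · rintro rfl; exact hux huw

lemma rel_trans (G : SimpleGraph V) {u v t : V} (huv : rel G u v) (hvt : rel G v t) :
    rel G u t := by
  intro w hwu hwt haw
  by_cases hwv : w = v
  · subst hwv
    by_cases htu : t = u
    · subst htu; exact haw
    · have h1 : G.Adj t u := hvt u (Ne.symm hwu) (fun h => htu h.symm) haw.symm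
      exact (huv t (fun h => htu h) (Ne.symm hwt) h1.symm).symm
  · exact hvt w hwv hwt (huv w hwu hwv haw)

lemma exists_min (G : SimpleGraph V) (hG : Unswitchable G) :
    ∀ l : List V, l ≠ [] → ∃ b ∈ l, ∀ x ∈ l, rel G b x := by
  intro l
  induction l with
  | nil => intro h; exact absurd rfl h
  | cons a l ih =>
    intro _
    rcases eq_or_ne l [] with rfl | hne
    · exact ⟨a, List.mem_cons_self, by
        intro x hx
        rcases List.mem_cons.mp hx with rfl | h
        · exact rel_refl G x
        · simp at h⟩
    · obtain ⟨b, hbmem, hb⟩ := ih hne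
      rcases rel_total G hG a b with h | h
      · refine ⟨a, List.mem_cons_self, ?_⟩
        intro x hx
        rcases List.mem_cons.mp hx with rfl | hx'
        · exact rel_refl G x
        · exact rel_trans G h (hb x hx')
      · refine ⟨b, List.mem_cons_of_mem a hbmem, ?_⟩
        intro x hx
        rcases List.mem_cons.mp hx with rfl | hx'
        · exact h
        · exact hb x hx'

lemma exists_iso_or_uni [Fintype V] [Nonempty V] (G : SimpleGraph V) (hG : Unswitchable G) :
    ∃ v : V, (∀ x, ¬ G.Adj v x) ∨ (∀ x, x ≠ v → G.Adj v x) := by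
  obtain ⟨b, -, hb⟩ := exists_min G hG Finset.univ.toList (by
    simp only [ne_eq, Finset.toList_eq_nil]
    exact Finset.univ_nonempty.ne_empty)
  by_cases h : ∃ w, G.Adj b w
  · obtain ⟨w, hw⟩ := h
    refine ⟨w, Or.inr fun x hx => ?_⟩
    rcases eq_or_ne x b with rfl | hxb
    · exact hw.symm
    · exact ((hb x (by simp [Finset.mem_toList])) w hw.ne' (Ne.symm hx) hw).symm
  · push_neg at h
    exact ⟨b, Or.inl h⟩


universe u

lemma aux (N : ℕ) : ∀ (V : Type u) [Fintype V] (G : SimpleGraph V), Unswitchable G →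
    Fintype.card V ≤ N → ∃ n : ℕ, 0 < n ∧ ∃ T : ℕ → Set V,
      (∀ k, 2 * n ≤ k → T k = ∅) ∧
      (∀ i j, i ≠ j → Disjoint (T i) (T j)) ∧
      ((⋃ i, T i) = Set.univ) ∧
      (∀ a b : V, a ≠ b → ∀ i j : ℕ, a ∈ T i → b ∈ T j → i ≤ j →
        (G.Adj a b ↔ (i + n < j ∨ n ≤ i))) := by
  induction N with
  | zero =>
    intro V _ G hG hcard
    haveI : IsEmpty V := Fintype.card_eq_zero_iff.mp (le_antisymm hcard (Nat.zero_le _))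
    refine ⟨1, one_pos, fun _ => ∅, fun _ _ => rfl, fun _ _ _ => by simp, ?_, fun a => isEmptyElim a⟩
    rw [Set.iUnion_empty]
    exact (Set.univ_eq_empty_iff.mpr ‹_›).symm
  | succ N ih =>
    intro V _ G hG hcard
    classical
    by_cases hle : Fintype.card V ≤ N
    · exact ih V G hG hle
    haveI : Nonempty V := by
      rw [← Fintype.card_pos_iff]; omega
    obtain ⟨v, hv⟩ := exists_iso_or_uni G hG
    have hG' : Unswitchable (G.comap (Subtype.val : {x : V // x ≠ v} → V)) := by
      rintro ⟨u, w, x, y, h1, h2, h3, h4, h5, h6, ha, hb, hc, hd⟩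
      exact hG ⟨↑u, ↑w, ↑x, ↑y, Subtype.coe_ne_coe.mpr h1, Subtype.coe_ne_coe.mpr h2,
        Subtype.coe_ne_coe.mpr h3, Subtype.coe_ne_coe.mpr h4, Subtype.coe_ne_coe.mpr h5,
        Subtype.coe_ne_coe.mpr h6, ha, hb, hc, hd⟩
    have hcard' : Fintype.card {x : V // x ≠ v} ≤ N := by
      have : Fintype.card {x : V // x ≠ v} < Fintype.card V :=
        Fintype.card_subtype_lt (x := v) (by simp)
      omega
    obtain ⟨n, hn, T', he, hd, hu, hadj⟩ :=
      ih {x : V // x ≠ v} (G.comap Subtype.val) hG' hcard'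
    have key : ∀ A B : Set {x : V // x ≠ v}, Disjoint A B →
        Disjoint (Subtype.val '' A) (Subtype.val '' B) := fun A B h =>
      Set.disjoint_image_of_injective Subtype.val_injective h
    have keyv : ∀ A : Set {x : V // x ≠ v}, Disjoint ({v} : Set V) (Subtype.val '' A) := by
      intro A
      rw [Set.disjoint_left]
      rintro x rfl ⟨a', -, ha'⟩
      exact a'.2 ha'
    rcases hv with hiso | huni
    · -- v isolated
      refine ⟨n + 1, Nat.succ_pos n, fun k =>
        if k < n then Subtype.val '' T' k else if k = n then {v}
          else Subtype.val '' T' (k - 1), ?_, ?_, ?_, ?_⟩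
      · intro k hk
        have h1 : ¬ k < n := by omega
        have h2 : k ≠ n := by omega
        simp only [if_neg h1, if_neg h2, he (k - 1) (by omega), Set.image_empty]
      · intro i j hij
        dsimp only
        split_ifs
        all_goals first
          | exact key _ _ (hd _ _ (by omega))
          | exact keyv _
          | exact (keyv _).symm
          | exact absurd (by omega : i = j) hij
      · apply Set.eq_univ_of_forall
        intro x
        rcases eq_or_ne x v with rfl | hx
        · refine Set.mem_iUnion.mpr ⟨n, ?_⟩
          simp
        · have hx2 : (⟨x, hx⟩ : {x : V // x ≠ v}) ∈ ⋃ i, T' i := hu ▸ Set.mem_univ _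
          obtain ⟨k, hk⟩ := Set.mem_iUnion.mp hx2
          by_cases hkn : k < n
          · exact Set.mem_iUnion.mpr ⟨k, by simp only [if_pos hkn]; exact ⟨⟨x, hx⟩, hk, rfl⟩⟩
          · refine Set.mem_iUnion.mpr ⟨k + 1, ?_⟩
            have h1 : ¬ k + 1 < n := by omega
            have h2 : k + 1 ≠ n := by omega
            simp only [if_neg h1, if_neg h2, Nat.add_sub_cancel]
            exact ⟨⟨x, hx⟩, hk, rfl⟩
      · intro a b hab i j ha hb hij
        dsimp only at ha hb
        by_cases hi1 : i < n
        · rw [if_pos hi1] at ha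
          obtain ⟨a', ha', rfl⟩ := ha
          by_cases hj1 : j < n
          · rw [if_pos hj1] at hb
            obtain ⟨b', hb', rfl⟩ := hb
            have h' := hadj a' b' (Subtype.coe_ne_coe.mp hab) i j ha' hb' hij
            rw [SimpleGraph.comap_adj] at h'
            rw [h']; omega
          · by_cases hj2 : j = n
            · rw [if_neg hj1, if_pos hj2, Set.mem_singleton_iff] at hb
              subst hb
              exact iff_of_false (fun h => hiso _ h.symm) (by omega)
            · rw [if_neg hj1, if_neg hj2] at hb
              obtain ⟨b', hb', rfl⟩ := hb
              have h' := hadj a' b' (Subtype.coe_ne_coe.mp hab) i (j - 1) ha' hb' (by omega)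
              rw [SimpleGraph.comap_adj] at h'
              rw [h']; omega
        · by_cases hi2 : i = n
          · rw [if_neg hi1, if_pos hi2, Set.mem_singleton_iff] at ha
            subst ha
            have hj1 : ¬ j < n := by omega
            by_cases hj2 : j = n
            · rw [if_neg hj1, if_pos hj2, Set.mem_singleton_iff] at hb
              exact absurd hb.symm hab
            · rw [if_neg hj1, if_neg hj2] at hb
              obtain ⟨b', hb', rfl⟩ := hb
              have hj3 : j - 1 < 2 * n := by
                by_contra hcon
                rw [he (j - 1) (by omega)] at hb'
                exact hb'
              exact iff_of_false (hiso _) (by omega)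
          · rw [if_neg hi1, if_neg hi2] at ha
            obtain ⟨a', ha', rfl⟩ := ha
            have hj1 : ¬ j < n := by omega
            have hj2 : j ≠ n := by omega
            rw [if_neg hj1, if_neg hj2] at hb
            obtain ⟨b', hb', rfl⟩ := hb
            have h' := hadj a' b' (Subtype.coe_ne_coe.mp hab) (i - 1) (j - 1) ha' hb' (by omega)
            rw [SimpleGraph.comap_adj] at h'
            rw [h']; omega
    · -- v universal
      refine ⟨n + 1, Nat.succ_pos n, fun k =>
        if k < n then Subtype.val '' T' k else if k = n then ∅
          else if k ≤ 2 * n then Subtype.val '' T' (k - 1)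
          else if k = 2 * n + 1 then {v} else ∅, ?_, ?_, ?_, ?_⟩
      · intro k hk
        have h1 : ¬ k < n := by omega
        have h2 : k ≠ n := by omega
        have h3 : ¬ k ≤ 2 * n := by omega
        have h4 : k ≠ 2 * n + 1 := by omega
        simp only [if_neg h1, if_neg h2, if_neg h3, if_neg h4]
      · intro i j hij
        dsimp only
        split_ifs
        all_goals first
          | exact key _ _ (hd _ _ (by omega))
          | exact keyv _
          | exact (keyv _).symm
          | exact absurd (by omega : i = j) hij
          | exact Set.disjoint_empty _
          | exact Set.empty_disjoint _
      · apply Set.eq_univ_of_forall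
        intro x
        rcases eq_or_ne x v with rfl | hx
        · refine Set.mem_iUnion.mpr ⟨2 * n + 1, ?_⟩
          have h1 : ¬ 2 * n + 1 < n := by omega
          have h2 : 2 * n + 1 ≠ n := by omega
          have h3 : ¬ 2 * n + 1 ≤ 2 * n := by omega
          simp only [if_neg h1, if_neg h2, if_neg h3, if_pos rfl]
          rfl
        · have hx2 : (⟨x, hx⟩ : {x : V // x ≠ v}) ∈ ⋃ i, T' i := hu ▸ Set.mem_univ _
          obtain ⟨k, hk⟩ := Set.mem_iUnion.mp hx2
          have hk2 : k < 2 * n := by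
            by_contra hcon
            rw [he k (by omega)] at hk
            exact hk
          by_cases hkn : k < n
          · exact Set.mem_iUnion.mpr ⟨k, by simp only [if_pos hkn]; exact ⟨⟨x, hx⟩, hk, rfl⟩⟩
          · refine Set.mem_iUnion.mpr ⟨k + 1, ?_⟩
            have h1 : ¬ k + 1 < n := by omega
            have h2 : k + 1 ≠ n := by omega
            have h3 : k + 1 ≤ 2 * n := by omega
            simp only [if_neg h1, if_neg h2, if_pos h3, Nat.add_sub_cancel]
            exact ⟨⟨x, hx⟩, hk, rfl⟩
      · intro a b hab i j ha hb hij
        dsimp only at ha hb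
        by_cases hi1 : i < n
        · rw [if_pos hi1] at ha
          obtain ⟨a', ha', rfl⟩ := ha
          by_cases hj1 : j < n
          · rw [if_pos hj1] at hb
            obtain ⟨b', hb', rfl⟩ := hb
            have h' := hadj a' b' (Subtype.coe_ne_coe.mp hab) i j ha' hb' hij
            rw [SimpleGraph.comap_adj] at h'
            rw [h']; omega
          by_cases hj2 : j = n
          · rw [if_neg hj1, if_pos hj2] at hb
            exact absurd hb (Set.notMem_empty b)
          by_cases hj3 : j ≤ 2 * n
          · rw [if_neg hj1, if_neg hj2, if_pos hj3] at hb
            obtain ⟨b', hb', rfl⟩ := hb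
            have h' := hadj a' b' (Subtype.coe_ne_coe.mp hab) i (j - 1) ha' hb' (by omega)
            rw [SimpleGraph.comap_adj] at h'
            rw [h']; omega
          by_cases hj4 : j = 2 * n + 1
          · rw [if_neg hj1, if_neg hj2, if_neg hj3, if_pos hj4, Set.mem_singleton_iff] at hb
            subst hb
            exact iff_of_true ((huni _ a'.2).symm) (by omega)
          · rw [if_neg hj1, if_neg hj2, if_neg hj3, if_neg hj4] at hb
            exact absurd hb (Set.notMem_empty b)
        by_cases hi2 : i = n
        · rw [if_neg hi1, if_pos hi2] at ha
          exact absurd ha (Set.notMem_empty a)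
        by_cases hi3 : i ≤ 2 * n
        · rw [if_neg hi1, if_neg hi2, if_pos hi3] at ha
          obtain ⟨a', ha', rfl⟩ := ha
          have hj1 : ¬ j < n := by omega
          by_cases hj2 : j = n
          · rw [if_neg hj1, if_pos hj2] at hb
            exact absurd hb (Set.notMem_empty b)
          by_cases hj3 : j ≤ 2 * n
          · rw [if_neg hj1, if_neg hj2, if_pos hj3] at hb
            obtain ⟨b', hb', rfl⟩ := hb
            have h' := hadj a' b' (Subtype.coe_ne_coe.mp hab) (i - 1) (j - 1) ha' hb' (by omega)
            rw [SimpleGraph.comap_adj] at h'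
            rw [h']; omega
          by_cases hj4 : j = 2 * n + 1
          · rw [if_neg hj1, if_neg hj2, if_neg hj3, if_pos hj4, Set.mem_singleton_iff] at hb
            subst hb
            exact iff_of_true ((huni _ a'.2).symm) (by omega)
          · rw [if_neg hj1, if_neg hj2, if_neg hj3, if_neg hj4] at hb
            exact absurd hb (Set.notMem_empty b)
        by_cases hi4 : i = 2 * n + 1
        · rw [if_neg hi1, if_neg hi2, if_neg hi3, if_pos hi4, Set.mem_singleton_iff] at ha
          subst ha
          have hj1 : ¬ j < n := by omega
          have hj2 : j ≠ n := by omega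
          have hj3 : ¬ j ≤ 2 * n := by omega
          by_cases hj4 : j = 2 * n + 1
          · rw [if_neg hj1, if_neg hj2, if_neg hj3, if_pos hj4, Set.mem_singleton_iff] at hb
            exact absurd hb.symm hab
          · rw [if_neg hj1, if_neg hj2, if_neg hj3, if_neg hj4] at hb
            exact absurd hb (Set.notMem_empty b)
        · rw [if_neg hi1, if_neg hi2, if_neg hi3, if_neg hi4] at ha
          exact absurd ha (Set.notMem_empty a)

end EggletonAux

/-- **Converse direction of Eggleton's theorem.**  Every unswitchable finite simple graph
arises from the Eggleton construction: there are a positive integer `n` and pairwise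
disjoint sets `S₁, …, S_{2n}` (indexed here by `Fin (2*n)`; the 1-based index of
`i : Fin (2*n)` is `i + 1`) with union the vertex set, such that distinct vertices
`a ∈ Sᵢ`, `b ∈ Sⱼ` with `i ≤ j` are adjacent exactly when `i + n < j` or `i > n`
(in 1-based indices; in 0-based indices: `i + n < j` or `n ≤ i`). -/
theorem eggleton_converse {V : Type*} [Fintype V] (G : SimpleGraph V)
    (hG : Unswitchable G) :
    ∃ n : ℕ, 0 < n ∧ ∃ S : Fin (2 * n) → Set V,
      (Pairwise fun i j => Disjoint (S i) (S j)) ∧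
      (⋃ i, S i = Set.univ) ∧
      (∀ a b : V, a ≠ b → ∀ i j : Fin (2 * n), a ∈ S i → b ∈ S j → i ≤ j →
        (G.Adj a b ↔ ((i : ℕ) + n < (j : ℕ) ∨ n ≤ (i : ℕ)))) := by
  obtain ⟨n, hn, T, he, hd, hu, hadj⟩ :=
    EggletonAux.aux (Fintype.card V) V G hG le_rfl
  refine ⟨n, hn, fun i => T i, ?_, ?_, ?_⟩
  · intro i j hij
    exact hd i j (fun h => hij (Fin.ext h))
  · apply Set.eq_univ_of_forall
    intro x
    have : x ∈ ⋃ i, T i := hu ▸ Set.mem_univ _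
    obtain ⟨k, hk⟩ := Set.mem_iUnion.mp this
    have hk2 : k < 2 * n := by
      by_contra hcon
      rw [he k (by omega)] at hk
      exact hk
    exact Set.mem_iUnion.mpr ⟨⟨k, hk2⟩, hk⟩
  · intro a b hab i j ha hb hij
    exact hadj a b hab i j ha hb hij
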